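/- Let E be a real inner product space (the parameter space), T > 0, and q ∈ ℝ^C a vector with nonnegative entries summing to 1. Let f : E → ℝ^C be differentiable at w ∈ E, and for each k let ψ_k ∈ E be the gradient (Riesz representative of the Fréchet derivative) of the k-th coordinate f_k at w. Define the loss L(w') = −Σ_{i=1}^C q_i · log p_i(f(w')), the cross-entropy of the temperature-T softmax of the logits against q. If the per-logit gradients ψ_1, …, ψ_C are pairwise orthogonal and all have the same norm c ≥ 0, then L is differentiable at w and the norm of its gradient satisfies ‖∇L(w)‖ = (c/T) · ‖p(f(w)) − q‖₂, where ‖·‖₂ is the Euclidean norm on ℝ^C. -/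

import Mathlib

/-- The temperature-`T` softmax of a logit vector `f : Fin C → ℝ`. -/
noncomputable def softmax {C : ℕ} (T : ℝ) (f : Fin C → ℝ) (i : Fin C) : ℝ :=
  Real.exp (f i / T) / ∑ j, Real.exp (f j / T)

/-- Let `E` be a (complete) real inner product space, `T > 0`, and `q ∈ ℝ^C` a probability
vector. Let `f : E → ℝ^C` be differentiable at `w`, with per-logit gradients
`ψ k = ∇ (f · k) w` that are pairwise orthogonal of common norm `c ≥ 0`. Then the
cross-entropy loss `L(w') = -∑ i, q i * log p_i(f w')` is differentiable at `w` and
`‖∇L(w)‖ = (c/T) * ‖p(f w) - q‖₂`. -/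
theorem gradient_norm_crossEntropy_softmax
    {E : Type*} [NormedAddCommGroup E] [InnerProductSpace ℝ E] [CompleteSpace E]
    {C : ℕ} (hC : 1 ≤ C) (T : ℝ) (hT : 0 < T)
    (q : Fin C → ℝ) (hq0 : ∀ i, 0 ≤ q i) (hq1 : ∑ i, q i = 1)
    (f : E → Fin C → ℝ) (w : E) (hf : DifferentiableAt ℝ f w)
    (ψ : Fin C → E) (hψ : ∀ k, HasGradientAt (fun w' => f w' k) (ψ k) w)
    (c : ℝ) (hc : 0 ≤ c)
    (horth : ∀ i j : Fin C, i ≠ j → inner ℝ (ψ i) (ψ j) = (0 : ℝ))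
    (hnorm : ∀ k : Fin C, ‖ψ k‖ = c) :
    DifferentiableAt ℝ (fun w' => -∑ i, q i * Real.log (softmax T (f w') i)) w ∧
      ‖gradient (fun w' => -∑ i, q i * Real.log (softmax T (f w') i)) w‖
        = (c / T) * Real.sqrt (∑ k, (softmax T (f w) k - q k) ^ 2) := by
  haveI : Nonempty (Fin C) := Fin.pos_iff_nonempty.mp hC
  set p : Fin C → ℝ := softmax T (f w) with hp
  set a : Fin C → ℝ := fun k => (p k - q k) / T with ha
  set g : E := ∑ k, a k • ψ k with hg
  -- positivity of the partition function
  have hS : ∀ w' : E, 0 < ∑ j, Real.exp (f w' j / T) :=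
    fun w' => Finset.sum_pos (fun j _ => Real.exp_pos _) Finset.univ_nonempty
  -- rewrite the loss
  have hL : (fun w' => -∑ i, q i * Real.log (softmax T (f w') i))
      = fun w' => Real.log (∑ j, Real.exp (f w' j / T)) - ∑ i, q i * (f w' i / T) := by
    funext w'
    have : ∀ i, Real.log (softmax T (f w') i)
        = f w' i / T - Real.log (∑ j, Real.exp (f w' j / T)) := by
      intro i
      rw [softmax, Real.log_div (Real.exp_ne_zero _) (hS w').ne', Real.log_exp]
    simp only [this, mul_sub]
    rw [Finset.sum_sub_distrib, ← Finset.sum_mul, hq1, one_mul]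
    ring
  -- the gradient
  have hgrad : HasGradientAt
      (fun w' => -∑ i, q i * Real.log (softmax T (f w') i)) g w := by
    rw [hL, hasGradientAt_iff_hasFDerivAt]
    set φ : Fin C → (E →L[ℝ] ℝ) := fun k => (InnerProductSpace.toDual ℝ E) (ψ k) with hφ
    have hφk : ∀ k, HasFDerivAt (fun w' => f w' k) (φ k) w := fun k =>
      (hψ k).hasFDerivAt
    have h1 : HasFDerivAt (fun w' => Real.log (∑ j, Real.exp (f w' j / T)))
        ((∑ j, Real.exp (f w j / T))⁻¹ •
          ∑ j, (Real.exp (f w j / T) * T⁻¹) • φ j) w := by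
      have hsum : HasFDerivAt (fun w' => ∑ j, Real.exp (f w' j / T))
          (∑ j, (Real.exp (f w j / T) * T⁻¹) • φ j) w := by
        apply HasFDerivAt.fun_sum
        intro j _
        have : HasFDerivAt (fun w' => f w' j / T) (T⁻¹ • φ j) w := by
          simpa [div_eq_inv_mul, smul_smul] using (hφk j).const_mul T⁻¹
        simpa [smul_smul, mul_comm] using this.exp
      exact hsum.log (hS w).ne'
    have h2 : HasFDerivAt (fun w' => ∑ i, q i * (f w' i / T))
        (∑ i, (q i * T⁻¹) • φ i) w := by
      apply HasFDerivAt.fun_sum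
      intro i _
      have : HasFDerivAt (fun w' => f w' i / T) (T⁻¹ • φ i) w := by
        simpa [div_eq_inv_mul, smul_smul] using (hφk i).const_mul T⁻¹
      simpa [smul_smul, mul_comm, mul_assoc] using this.const_mul (q i)
    have hD := h1.sub h2
    convert hD using 1
    · rfl
    · rfl
    · rfl
    rw [hg, map_sum]
    rw [Finset.smul_sum, ← Finset.sum_sub_distrib]
    refine Finset.sum_congr rfl fun k _ => ?_
    rw [map_smul, smul_smul, ← sub_smul]
    congr 1
    simp only [ha, hp, softmax]
    field_simp
  refine ⟨hgrad.differentiableAt, ?_⟩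
  rw [hgrad.gradient]
  -- compute the norm
  have hinner : (inner ℝ g g : ℝ) = ∑ k, a k ^ 2 * c ^ 2 := by
    rw [hg, sum_inner]
    refine Finset.sum_congr rfl fun k _ => ?_
    rw [inner_sum]
    rw [Finset.sum_eq_single k]
    · rw [real_inner_smul_left, real_inner_smul_right, real_inner_self_eq_norm_sq, hnorm]
      ring
    · intro j _ hj
      rw [real_inner_smul_left, real_inner_smul_right, horth k j (Ne.symm hj)]
      ring
    · simp
  rw [norm_eq_sqrt_real_inner, hinner]
  have : ∑ k, a k ^ 2 * c ^ 2 = (c / T) ^ 2 * ∑ k, (p k - q k) ^ 2 := by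
    rw [Finset.mul_sum]
    refine Finset.sum_congr rfl fun k _ => ?_
    rw [ha]
    field_simp
  rw [this, Real.sqrt_mul (sq_nonneg _), Real.sqrt_sq (div_nonneg hc hT.le)]
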